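/- For every k ≥ 0, the iterated blow-up coloring R^k of the complete graph on 4^k vertices has exactly (4^{3k} − 4^k)/15 rainbow triangles. -/

import Mathlib

/-- A triangle (3-element vertex set) is rainbow for a symmetric coloring given
as a two-argument function: its three edges get pairwise distinct colors. -/
def IsRainbowP {V C : Type*} [DecidableEq V] (g : V → V → C) (T : Finset V) : Prop :=
  ∃ u v w : V, T = {u, v, w} ∧ u ≠ v ∧ u ≠ w ∧ v ≠ w ∧
    g u v ≠ g u w ∧ g u v ≠ g v w ∧ g u w ≠ g v w

/-- The number of rainbow triangles. -/
noncomputable def rbCountP {V C : Type*} [DecidableEq V] (g : V → V → C) : ℕ :=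
  Nat.card {T : Finset V // IsRainbowP g T}

/-- The iterated blow-up coloring `R^k` on the vertex set `(ZMod 2 × ZMod 2)^k`:
the color of an edge `{u, v}` is `u i + v i` where `i` is the first coordinate
in which `u` and `v` differ (junk value `0` on the diagonal). -/
def Rk (k : ℕ) (u v : Fin k → ZMod 2 × ZMod 2) : ZMod 2 × ZMod 2 :=
  if h : u = v then 0
  else
    let i := (Finset.univ.filter fun i => u i ≠ v i).min' (by
      obtain ⟨i, hi⟩ := Function.ne_iff.mp h
      exact ⟨i, Finset.mem_filter.mpr ⟨Finset.mem_univ i, hi⟩⟩)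
    u i + v i

/-! ### Auxiliary machinery -/

abbrev XX := ZMod 2 × ZMod 2

lemma Rk_eq {k : ℕ} {u v : Fin k → XX} (h : u ≠ v) (i : Fin k) (hi : u i ≠ v i)
    (hmin : ∀ j, j < i → u j = v j) : Rk k u v = u i + v i := by
  rw [Rk, dif_neg h]
  have hne : (Finset.univ.filter fun i => u i ≠ v i).Nonempty := by
    obtain ⟨i, hi'⟩ := Function.ne_iff.mp h
    exact ⟨i, Finset.mem_filter.mpr ⟨Finset.mem_univ i, hi'⟩⟩
  have hmem := Finset.min'_mem _ hne
  have h1 : (Finset.univ.filter fun i => u i ≠ v i).min' hne = i := by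
    refine le_antisymm (Finset.min'_le _ _ (by simp [hi])) ?_
    refine le_of_not_gt fun hlt => ?_
    have := Finset.mem_filter.mp hmem
    exact this.2 (hmin _ hlt)
  simp only [h1]

lemma Rk_self {k : ℕ} (u : Fin k → XX) : Rk k u u = 0 := by simp [Rk]

lemma Rk_cons {k : ℕ} (a b : XX) (u v : Fin k → XX) :
    Rk (k+1) (Fin.cons a u) (Fin.cons b v) = if a = b then Rk k u v else a + b := by
  by_cases hab : a = b
  · subst hab
    rw [if_pos rfl]
    by_cases huv : u = v
    · subst huv; rw [Rk_self, Rk_self]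
    · have hne : (Finset.univ.filter fun i => u i ≠ v i).Nonempty := by
        obtain ⟨i, hi'⟩ := Function.ne_iff.mp huv
        exact ⟨i, Finset.mem_filter.mpr ⟨Finset.mem_univ i, hi'⟩⟩
      set i₀ := (Finset.univ.filter fun i => u i ≠ v i).min' hne with hi₀def
      have hi₀ : u i₀ ≠ v i₀ := (Finset.mem_filter.mp (Finset.min'_mem _ hne)).2
      have hlt : ∀ j, j < i₀ → u j = v j := by
        intro j hj
        by_contra hc
        exact absurd (Finset.min'_le _ j (Finset.mem_filter.mpr ⟨Finset.mem_univ j, hc⟩))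
          (not_le.mpr hj)
      have h1 : Rk k u v = u i₀ + v i₀ := Rk_eq huv i₀ hi₀ hlt
      have hcc : (Fin.cons a u : Fin (k+1) → XX) ≠ Fin.cons a v := by
        intro hcc
        exact huv (by simpa [Fin.tail_cons] using congrArg Fin.tail hcc)
      have h2 : Rk (k+1) (Fin.cons a u) (Fin.cons a v)
          = (Fin.cons a u : Fin (k+1) → XX) i₀.succ + (Fin.cons a v : Fin (k+1) → XX) i₀.succ := by
        refine Rk_eq hcc i₀.succ (by simpa [Fin.cons_succ] using hi₀) ?_
        intro j
        refine Fin.cases ?_ ?_ j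
        · simp
        · intro j' hj'
          have : j' < i₀ := by simpa [Fin.succ_lt_succ_iff] using hj'
          simp [Fin.cons_succ, hlt j' this]
      rw [h2, h1]; simp [Fin.cons_succ]
  · rw [if_neg hab]
    have hcc : (Fin.cons a u : Fin (k+1) → XX) ≠ Fin.cons b v := by
      intro hcc
      exact hab (by simpa using congrFun hcc 0)
    have h := Rk_eq hcc 0 (by simpa using hab) (fun j hj => absurd hj (Fin.not_lt_zero j))
    simpa using h

lemma Rk_symm {k : ℕ} (u v : Fin k → XX) : Rk k u v = Rk k v u := by
  by_cases h : u = v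
  · subst h; rfl
  · have h' : v ≠ u := fun e => h e.symm
    have hne : (Finset.univ.filter fun i => u i ≠ v i).Nonempty := by
      obtain ⟨i, hi'⟩ := Function.ne_iff.mp h
      exact ⟨i, Finset.mem_filter.mpr ⟨Finset.mem_univ i, hi'⟩⟩
    set i₀ := (Finset.univ.filter fun i => u i ≠ v i).min' hne with hi₀def
    have hi₀ : u i₀ ≠ v i₀ := (Finset.mem_filter.mp (Finset.min'_mem _ hne)).2
    have hlt : ∀ j, j < i₀ → u j = v j := by
      intro j hj
      by_contra hc
      exact absurd (Finset.min'_le _ j (Finset.mem_filter.mpr ⟨Finset.mem_univ j, hc⟩))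
        (not_le.mpr hj)
    rw [Rk_eq h i₀ hi₀ hlt, Rk_eq h' i₀ (fun e => hi₀ e.symm) (fun j hj => (hlt j hj).symm)]
    exact add_comm _ _

/-- Ordered rainbow triples. -/
def Rord {V C : Type*} (g : V → V → C) (t : V × V × V) : Prop :=
  t.1 ≠ t.2.1 ∧ t.1 ≠ t.2.2 ∧ t.2.1 ≠ t.2.2 ∧
    g t.1 t.2.1 ≠ g t.1 t.2.2 ∧ g t.1 t.2.1 ≠ g t.2.1 t.2.2 ∧ g t.1 t.2.2 ≠ g t.2.1 t.2.2

lemma Rord.swap12 {V C : Type*} {g : V → V → C} (hsym : ∀ u v, g u v = g v u)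
    {u v w : V} (h : Rord g (u, v, w)) : Rord g (v, u, w) := by
  obtain ⟨h1, h2, h3, h4, h5, h6⟩ := h
  refine ⟨h1.symm, h3, h2, ?_, ?_, ?_⟩
  · rw [hsym v u]; exact fun e => h5 e
  · rw [hsym v u]; exact fun e => h4 e
  · exact fun e => h6 e.symm

lemma Rord.swap23 {V C : Type*} {g : V → V → C} (hsym : ∀ u v, g u v = g v u)
    {u v w : V} (h : Rord g (u, v, w)) : Rord g (u, w, v) := by
  obtain ⟨h1, h2, h3, h4, h5, h6⟩ := h
  exact ⟨h2, h1, h3.symm, h4.symm, fun e => h6 (hsym w v ▸ e), fun e => h5 (hsym w v ▸ e)⟩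

/-- The ordered rainbow triples are counted six times per rainbow triangle. -/
lemma six_mul_rb {V C : Type*} [Fintype V] [DecidableEq V] {g : V → V → C}
    (hsym : ∀ u v, g u v = g v u) :
    Nat.card {t : V × V × V // Rord g t} = 6 * rbCountP g := by
  classical
  rw [rbCountP, Nat.card_eq_fintype_card, Nat.card_eq_fintype_card,
    Fintype.card_subtype, Fintype.card_subtype]
  set S : Finset (V × V × V) := Finset.univ.filter (Rord g) with hS
  set Tset : Finset (Finset V) := Finset.univ.filter (IsRainbowP g) with hT
  have hmap : ∀ t ∈ S, ({t.1, t.2.1, t.2.2} : Finset V) ∈ Tset := by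
    rintro ⟨a, b, c⟩ ht
    have h := (Finset.mem_filter.mp ht).2
    exact Finset.mem_filter.mpr ⟨Finset.mem_univ _,
      ⟨a, b, c, rfl, h.1, h.2.1, h.2.2.1, h.2.2.2.1, h.2.2.2.2.1, h.2.2.2.2.2⟩⟩
  rw [Finset.card_eq_sum_card_fiberwise hmap]
  have hfib : ∀ T ∈ Tset,
      (S.filter (fun t => ({t.1, t.2.1, t.2.2} : Finset V) = T)).card = 6 := by
    intro T hTmem
    obtain ⟨u, v, w, rfl, huv, huw, hvw, hc1, hc2, hc3⟩ := (Finset.mem_filter.mp hTmem).2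
    have hr : Rord g (u, v, w) := ⟨huv, huw, hvw, hc1, hc2, hc3⟩
    have hset : S.filter (fun t => ({t.1, t.2.1, t.2.2} : Finset V) = {u, v, w}) =
        ({(u,v,w), (u,w,v), (v,u,w), (v,w,u), (w,u,v), (w,v,u)} : Finset (V × V × V)) := by
      ext ⟨a, b, c⟩
      simp only [hS, Finset.mem_filter, Finset.mem_univ, true_and, Finset.mem_insert,
        Finset.mem_singleton, Prod.mk.injEq]
      constructor
      · rintro ⟨hord, hset⟩
        have ha : a = u ∨ a = v ∨ a = w := by
          have : a ∈ ({u, v, w} : Finset V) := hset ▸ (by simp)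
          simpa using this
        have hb : b = u ∨ b = v ∨ b = w := by
          have : b ∈ ({u, v, w} : Finset V) := hset ▸ (by simp)
          simpa using this
        have hc : c = u ∨ c = v ∨ c = w := by
          have : c ∈ ({u, v, w} : Finset V) := hset ▸ (by simp)
          simpa using this
        have hab := hord.1
        have hac := hord.2.1
        have hbc := hord.2.2.1
        rcases ha with rfl | rfl | rfl <;> rcases hb with rfl | rfl | rfl <;>
          rcases hc with rfl | rfl | rfl <;> simp_all
      · rintro (⟨rfl, rfl, rfl⟩ | ⟨rfl, rfl, rfl⟩ | ⟨rfl, rfl, rfl⟩ | ⟨rfl, rfl, rfl⟩ |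
          ⟨rfl, rfl, rfl⟩ | ⟨rfl, rfl, rfl⟩)
        · exact ⟨hr, rfl⟩
        · exact ⟨hr.swap23 hsym, by ext x; simp; tauto⟩
        · exact ⟨hr.swap12 hsym, by ext x; simp; tauto⟩
        · exact ⟨(hr.swap12 hsym).swap23 hsym, by ext x; simp; tauto⟩
        · exact ⟨(hr.swap23 hsym).swap12 hsym, by ext x; simp; tauto⟩
        · exact ⟨((hr.swap12 hsym).swap23 hsym).swap12 hsym, by ext x; simp; tauto⟩
    rw [hset]
    rw [Finset.card_insert_of_notMem (by simp [Prod.ext_iff]; tauto),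
      Finset.card_insert_of_notMem (by simp [Prod.ext_iff]; tauto),
      Finset.card_insert_of_notMem (by simp [Prod.ext_iff]; tauto),
      Finset.card_insert_of_notMem (by simp [Prod.ext_iff]; tauto),
      Finset.card_insert_of_notMem (by simp [Prod.ext_iff]; tauto),
      Finset.card_singleton]
  rw [Finset.sum_congr rfl hfib, Finset.sum_const, smul_eq_mul, mul_comm]

/-- The one-step blow-up coloring on `XX × W`. -/
def g1 (k : ℕ) (p q : XX × (Fin k → XX)) : XX :=
  if p.1 = q.1 then Rk k p.2 q.2 else p.1 + q.1

lemma ord_transfer {V V' C : Type*} (e : V ≃ V') (g : V → V → C) (g' : V' → V' → C)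
    (hc : ∀ u v, g' (e u) (e v) = g u v) :
    Nat.card {t : V × V × V // Rord g t} = Nat.card {t : V' × V' × V' // Rord g' t} := by
  apply Nat.card_congr
  refine Equiv.subtypeEquiv (e.prodCongr (e.prodCongr e)) ?_
  rintro ⟨u, v, w⟩
  simp [Rord, hc, Equiv.prodCongr]

section count
variable {k : ℕ}
local notation "W" => Fin k → XX

lemma iff1 (t : (XX × W) × (XX × W) × (XX × W)) :
    (Rord (g1 k) t ∧ (t.1.1 ≠ t.2.1.1 ∧ t.1.1 ≠ t.2.2.1 ∧ t.2.1.1 ≠ t.2.2.1)) ↔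
      (t.1.1 ≠ t.2.1.1 ∧ t.1.1 ≠ t.2.2.1 ∧ t.2.1.1 ≠ t.2.2.1) := by
  obtain ⟨⟨a, u⟩, ⟨b, v⟩, ⟨c, w⟩⟩ := t
  dsimp only
  constructor
  · exact fun h => h.2
  · rintro ⟨hab, hac, hbc⟩
    refine ⟨⟨fun h => hab (congrArg Prod.fst h), fun h => hac (congrArg Prod.fst h),
      fun h => hbc (congrArg Prod.fst h), ?_, ?_, ?_⟩, hab, hac, hbc⟩
    · simp only [g1, if_neg hab, if_neg hac]
      intro h
      exact hbc (add_left_cancel h)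
    · simp only [g1, if_neg hab, if_neg hbc]
      intro h
      rw [add_comm a b] at h
      exact hac (add_left_cancel h)
    · simp only [g1, if_neg hac, if_neg hbc]
      intro h
      exact hab (add_right_cancel h)

lemma iff2 (t : (XX × W) × (XX × W) × (XX × W)) :
    (Rord (g1 k) t ∧ ¬(t.1.1 ≠ t.2.1.1 ∧ t.1.1 ≠ t.2.2.1 ∧ t.2.1.1 ≠ t.2.2.1)) ↔
      (t.1.1 = t.2.1.1 ∧ t.1.1 = t.2.2.1 ∧ Rord (Rk k) (t.1.2, t.2.1.2, t.2.2.2)) := by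
  obtain ⟨⟨a, u⟩, ⟨b, v⟩, ⟨c, w⟩⟩ := t
  dsimp only [Rord]
  constructor
  · rintro ⟨⟨h1, h2, h3, h4, h5, h6⟩, hQ⟩
    have hab : a = b := by
      by_contra hab
      have h' : a = c ∨ b = c := by tauto
      rcases h' with rfl | rfl
      · exact h5 (by simp only [g1, if_neg hab, if_neg (Ne.symm hab)]; exact add_comm a b)
      · exact h4 (by simp only [g1, if_neg hab])
    subst hab
    have hac : a = c := by
      by_contra hac
      exact h6 (by simp only [g1, if_neg hac])
    subst hac
    refine ⟨rfl, rfl, fun h => h1 (by rw [h]), fun h => h2 (by rw [h]),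
      fun h => h3 (by rw [h]), ?_, ?_, ?_⟩
    · simpa only [g1, if_pos rfl, ↓reduceIte] using h4
    · simpa only [g1, if_pos rfl, ↓reduceIte] using h5
    · simpa only [g1, if_pos rfl, ↓reduceIte] using h6
  · rintro ⟨hab, hac, h1, h2, h3, h4, h5, h6⟩
    have hb : b = a := hab.symm
    have hc : c = a := hac.symm
    subst hb; subst hc
    refine ⟨⟨fun h => h1 (congrArg Prod.snd h), fun h => h2 (congrArg Prod.snd h),
      fun h => h3 (congrArg Prod.snd h), ?_, ?_, ?_⟩, by tauto⟩
    · simpa only [g1, if_pos rfl, ↓reduceIte] using h4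
    · simpa only [g1, if_pos rfl, ↓reduceIte] using h5
    · simpa only [g1, if_pos rfl, ↓reduceIte] using h6

def eQ : {t : (XX × W) × (XX × W) × (XX × W) //
      t.1.1 ≠ t.2.1.1 ∧ t.1.1 ≠ t.2.2.1 ∧ t.2.1.1 ≠ t.2.2.1} ≃
    {p : XX × XX × XX // p.1 ≠ p.2.1 ∧ p.1 ≠ p.2.2 ∧ p.2.1 ≠ p.2.2} × (W × W × W) where
  toFun x := (⟨(x.1.1.1, x.1.2.1.1, x.1.2.2.1), x.2⟩, (x.1.1.2, x.1.2.1.2, x.1.2.2.2))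
  invFun y := ⟨((y.1.1.1, y.2.1), (y.1.1.2.1, y.2.2.1), (y.1.1.2.2, y.2.2.2)), y.1.2⟩
  left_inv := by rintro ⟨⟨⟨a, u⟩, ⟨b, v⟩, ⟨c, w⟩⟩, h⟩; rfl
  right_inv := by rintro ⟨⟨⟨a, b, c⟩, h⟩, ⟨u, v, w⟩⟩; rfl

def eE : {t : (XX × W) × (XX × W) × (XX × W) //
      t.1.1 = t.2.1.1 ∧ t.1.1 = t.2.2.1 ∧ Rord (Rk k) (t.1.2, t.2.1.2, t.2.2.2)} ≃
    XX × {s : W × W × W // Rord (Rk k) s} where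
  toFun x := (x.1.1.1, ⟨(x.1.1.2, x.1.2.1.2, x.1.2.2.2), x.2.2.2⟩)
  invFun y := ⟨((y.1, y.2.1.1), (y.1, y.2.1.2.1), (y.1, y.2.1.2.2)), rfl, rfl, y.2.2⟩
  left_inv := by
    rintro ⟨⟨⟨a, u⟩, ⟨b, v⟩, ⟨c, w⟩⟩, h⟩
    obtain ⟨h1, h2, h3⟩ := h
    dsimp only at h1 h2
    subst h1; subst h2; rfl
  right_inv := by rintro ⟨a, ⟨⟨u, v, w⟩, h⟩⟩; rfl

lemma card24 :
    Nat.card {p : XX × XX × XX // p.1 ≠ p.2.1 ∧ p.1 ≠ p.2.2 ∧ p.2.1 ≠ p.2.2} = 24 := by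
  rw [Nat.card_eq_fintype_card]
  decide

lemma step_count :
    Nat.card {t : (XX × W) × (XX × W) × (XX × W) // Rord (g1 k) t} =
      24 * (Fintype.card (Fin k → XX)) ^ 3 + 4 * Nat.card {s : W × W × W // Rord (Rk k) s} := by
  classical
  have e0 : {t : (XX × W) × (XX × W) × (XX × W) // Rord (g1 k) t} ≃
      {x : {t : (XX × W) × (XX × W) × (XX × W) // Rord (g1 k) t} //
        (x.1.1.1 ≠ x.1.2.1.1 ∧ x.1.1.1 ≠ x.1.2.2.1 ∧ x.1.2.1.1 ≠ x.1.2.2.1)} ⊕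
      {x : {t : (XX × W) × (XX × W) × (XX × W) // Rord (g1 k) t} //
        ¬(x.1.1.1 ≠ x.1.2.1.1 ∧ x.1.1.1 ≠ x.1.2.2.1 ∧ x.1.2.1.1 ≠ x.1.2.2.1)} :=
    (Equiv.sumCompl _).symm
  rw [Nat.card_congr e0, Nat.card_sum]
  congr 1
  · rw [Nat.card_congr ((Equiv.subtypeSubtypeEquivSubtypeInter _ _).trans
      ((Equiv.subtypeEquivRight iff1).trans eQ))]
    rw [Nat.card_prod, card24, Nat.card_prod, Nat.card_prod, Nat.card_eq_fintype_card]
    ring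
  · rw [Nat.card_congr ((Equiv.subtypeSubtypeEquivSubtypeInter _ _).trans
      ((Equiv.subtypeEquivRight iff2).trans eE))]
    rw [Nat.card_prod, Nat.card_eq_fintype_card (α := XX)]
    norm_num [Fintype.card_prod]

def vEquiv (k : ℕ) : (Fin (k+1) → XX) ≃ XX × (Fin k → XX) where
  toFun u := (u 0, Fin.tail u)
  invFun p := Fin.cons p.1 p.2
  left_inv u := Fin.cons_self_tail u
  right_inv p := by simp [Fin.tail_cons]

lemma g1_compat (u v : Fin (k+1) → XX) :
    g1 k (vEquiv k u) (vEquiv k v) = Rk (k+1) u v := by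
  conv_rhs => rw [← Fin.cons_self_tail u, ← Fin.cons_self_tail v]
  rw [Rk_cons]
  rfl

end count

noncomputable def Ocard (k : ℕ) : ℕ :=
  Nat.card {t : (Fin k → XX) × (Fin k → XX) × (Fin k → XX) // Rord (Rk k) t}

lemma cardW (k : ℕ) : Fintype.card (Fin k → XX) = 4 ^ k := by
  rw [Fintype.card_fun]
  norm_num [Fintype.card_prod]

lemma Ocard_zero : Ocard 0 = 0 := by
  have : IsEmpty {t : (Fin 0 → XX) × (Fin 0 → XX) × (Fin 0 → XX) // Rord (Rk 0) t} :=
    ⟨fun x => x.2.1 (Subsingleton.elim _ _)⟩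
  rw [Ocard, Nat.card_eq_zero]
  exact Or.inl this

lemma Ocard_succ (k : ℕ) : Ocard (k + 1) = 24 * 4 ^ (3 * k) + 4 * Ocard k := by
  rw [Ocard, ord_transfer (vEquiv k) (Rk (k+1)) (g1 k) (g1_compat), step_count, cardW,
    Ocard, ← pow_mul, Nat.mul_comm k 3]

lemma Ocard_val (k : ℕ) : 5 * Ocard k + 2 * 4 ^ k = 2 * 4 ^ (3 * k) := by
  induction k with
  | zero => simp [Ocard_zero]
  | succ n ih =>
    rw [Ocard_succ]
    have h1 : (4 : ℕ) ^ (3 * (n + 1)) = 64 * 4 ^ (3 * n) := by ring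
    have h2 : (4 : ℕ) ^ (n + 1) = 4 * 4 ^ n := by ring
    rw [h1, h2]
    omega

theorem stmt16 (k : ℕ) :
    rbCountP (Rk k) = (4 ^ (3 * k) - 4 ^ k) / 15 := by
  have h6 : Ocard k = 6 * rbCountP (Rk k) := six_mul_rb (fun u v => Rk_symm u v)
  have h5 := Ocard_val k
  omega
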